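/- The set of gauge-equivalence classes of minima of the U(1) Wilson action with C* boundary conditions in the spatial directions and periodic boundary in time is in bijection with Ω = {(z₀,z₁,z₂,1) : z₀² = z₁² = z₂² = 1}, with representative configurations Ū_z(x,μ) = z_μ if x_μ = L_μ−1 and 1 otherwise; uniqueness of z follows from gauge invariance of the Wilson line W(μ) = ∏_{s=0}^{L_μ−1} U(s e_μ, μ) along periodic directions μ and of the combination W(μ)W(3)⁻¹ along C*-directions μ ≠ 3. -/

import Mathlib

noncomputable section Aux14

/-- signed ordered product of `u` over `[0,n)` (or inverse over `[n,0)` for `n<0`). -/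
def zp (u : ℤ → ℂ) (n : ℤ) : ℂ :=
  (∏ s ∈ Finset.range n.toNat, u s) * (∏ s ∈ Finset.range (-n).toNat, u (-(s:ℤ) - 1))⁻¹

lemma zp_zero (u : ℤ → ℂ) : zp u 0 = 1 := by simp [zp]

lemma zp_succ (u : ℤ → ℂ) (n : ℤ) (hu : u n ≠ 0) : zp u (n + 1) = zp u n * u n := by
  rcases le_or_gt 0 n with h | h
  · have h1 : (n+1).toNat = n.toNat + 1 := by omega
    have h2 : (-n).toNat = 0 := by omega
    have h3 : (-(n+1)).toNat = 0 := by omega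
    have h3' : (-1 + -n).toNat = 0 := by omega
    have h4 : ((n.toNat : ℤ)) = n := by omega
    simp [zp, h1, h2, h3, h3', Finset.prod_range_succ, h4]
  · have h1 : (n+1).toNat = 0 := by omega
    have h2 : n.toNat = 0 := by omega
    have h3 : (-n).toNat = (-(n+1)).toNat + 1 := by omega
    have h4 : -(((-(n+1)).toNat : ℤ)) - 1 = n := by omega
    simp only [zp, h1, h2, h3, Finset.prod_range_succ, h4, Finset.range_zero,
      Finset.prod_empty, one_mul]
    rw [mul_inv, mul_assoc, inv_mul_cancel₀ hu, mul_one]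

lemma zp_ne_zero (u : ℤ → ℂ) (hu : ∀ s, u s ≠ 0) (n : ℤ) : zp u n ≠ 0 := by
  have h1 : (∏ s ∈ Finset.range n.toNat, u s) ≠ 0 := Finset.prod_ne_zero_iff.2 fun s _ => hu s
  have h2 : (∏ s ∈ Finset.range (-n).toNat, u (-(s:ℤ) - 1)) ≠ 0 :=
    Finset.prod_ne_zero_iff.2 fun s _ => hu _
  exact mul_ne_zero h1 (inv_ne_zero h2)

lemma zp_abs (u : ℤ → ℂ) (hu : ∀ s, ‖u s‖ = 1) (n : ℤ) :
    ‖zp u n‖ = 1 := by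
  simp [zp, norm_mul, norm_inv, norm_prod, hu]

lemma zp_conj (u : ℤ → ℂ) (n : ℤ) :
    (starRingEnd ℂ) (zp u n) = zp (fun s => (starRingEnd ℂ) (u s)) n := by
  simp [zp, map_mul, map_inv₀, map_prod]

lemma zp_telescope (u a v : ℤ → ℂ) (ha : ∀ s, a s ≠ 0) (hv : ∀ s, v s ≠ 0)
    (h : ∀ s, u s = v s * a s * (v (s + 1))⁻¹) (n : ℤ) :
    zp u n = v 0 * zp a n * (v n)⁻¹ := by
  have hu : ∀ s, u s ≠ 0 := fun s => by
    rw [h s]; exact mul_ne_zero (mul_ne_zero (hv s) (ha s)) (inv_ne_zero (hv (s+1)))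
  induction n using Int.induction_on with
  | zero => rw [zp_zero, zp_zero, mul_one, mul_inv_cancel₀ (hv 0)]
  | succ k ih =>
      have h1 := hv k; have h2 := hv (k+1); have h3 := ha k
      rw [zp_succ u k (hu k), zp_succ a k (ha k), ih, h k]
      field_simp
  | pred k ih =>
      have e1 : (-(k:ℤ) - 1) + 1 = -k := by ring
      have h2 : zp u (-(k:ℤ)) = zp u (-(k:ℤ) - 1) * u (-(k:ℤ) - 1) := by
        rw [← zp_succ u _ (hu _), e1]
      have h3 : zp a (-(k:ℤ)) = zp a (-(k:ℤ) - 1) * a (-(k:ℤ) - 1) := by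
        rw [← zp_succ a _ (ha _), e1]
      have h4 := h (-(k:ℤ) - 1)
      rw [e1] at h4
      rw [h2, h3, h4] at ih
      have hvk := hv (-(k:ℤ))
      have hvk1 := hv (-(k:ℤ) - 1)
      have hak1 := ha (-(k:ℤ) - 1)
      field_simp at ih ⊢
      refine mul_right_cancel₀ hak1 ?_
      calc zp u (-(k:ℤ) - 1) * v (-(k:ℤ) - 1) * a (-(k:ℤ) - 1)
          = zp u (-(k:ℤ) - 1) * (v (-(k:ℤ) - 1) * a (-(k:ℤ) - 1)) := by ring
        _ = v 0 * (zp a (-(k:ℤ) - 1) * a (-(k:ℤ) - 1)) := by rw [← mul_assoc, ih, mul_assoc]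
        _ = v 0 * zp a (-(k:ℤ) - 1) * a (-(k:ℤ) - 1) := by ring

lemma ediv_succ (L x : ℤ) (hL : 0 < L) :
    (x + 1) / L = x / L + (if x % L = L - 1 then 1 else 0) := by
  have hdm := Int.mul_ediv_add_emod x L
  have h0 : 0 ≤ x % L := Int.emod_nonneg x (ne_of_gt hL)
  have h1 : x % L < L := Int.emod_lt_of_pos x hL
  split_ifs with hc
  · have : x + 1 = (x / L + 1) * L := by linarith
    rw [this, Int.mul_ediv_cancel _ (ne_of_gt hL)]
  · have he : x + 1 = (x % L + 1) + L * (x / L) := by linarith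
    rw [he, Int.add_mul_ediv_left _ _ (ne_of_gt hL),
      Int.ediv_eq_zero_of_lt (by linarith) (by omega), zero_add, add_comm]
    simp

lemma ediv_addL (L x : ℤ) (hL : 0 < L) : (x + L) / L = x / L + 1 := by
  have := Int.add_mul_ediv_right x 1 (ne_of_gt hL)
  simpa using this

lemma prodline (L : ℤ) (hL : 0 < L) (z : ℂ) :
    zp (fun s => if s % L = L - 1 then z else 1) L = z := by
  have hneg : (-L).toNat = 0 := by omega
  rw [zp, hneg]
  simp only [Finset.range_zero, Finset.prod_empty, inv_one, mul_one]
  rw [Finset.prod_eq_single_of_mem (L.toNat - 1) (by simp; omega)]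
  · have : ((L.toNat - 1 : ℕ) : ℤ) = L - 1 := by omega
    rw [this, if_pos (Int.emod_eq_of_lt (by omega) (by omega))]
  · intro b hb hbne
    rw [if_neg]
    have hb' : (b : ℤ) < L := by
      simp only [Finset.mem_range] at hb; omega
    rw [Int.emod_eq_of_lt (by omega) hb']
    omega

abbrev Ev (μ : Fin 4) : Fin 4 → ℤ := Pi.single μ 1

lemma Ev_apply (μ ν : Fin 4) : Ev μ ν = if ν = μ then 1 else 0 := by
  simp [Ev, Pi.single_apply]

lemma add_Ev_apply (x : Fin 4 → ℤ) (μ ν : Fin 4) :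
    (x + Ev μ) ν = x ν + if ν = μ then 1 else 0 := by
  simp [Ev, Pi.single_apply]

lemma add_smul_Ev_apply (x : Fin 4 → ℤ) (n : ℤ) (μ ν : Fin 4) :
    (x + n • Ev μ) ν = x ν + if ν = μ then n else 0 := by
  simp [Ev, Pi.single_apply, mul_ite]

lemma decomp4 (x : Fin 4 → ℤ) :
    x = x 0 • Ev 0 + x 1 • Ev 1 + x 2 • Ev 2 + x 3 • Ev 3 := by
  funext i
  fin_cases i <;> simp [Ev, Pi.single_apply]

structure Good (Lsz : Fin 4 → ℤ) (U : (Fin 4 → ℤ) → Fin 4 → ℂ) : Prop where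
  hL : ∀ μ, 0 < Lsz μ
  habs : ∀ x μ, ‖U x μ‖ = 1
  hbc : ∀ (x : Fin 4 → ℤ) (μ ρ : Fin 4),
      U (x + Lsz μ • (Pi.single μ 1 : Fin 4 → ℤ)) ρ =
        if μ = 0 then U x ρ else (starRingEnd ℂ) (U x ρ)
  hplaq : ∀ (x : Fin 4 → ℤ) (μ ν : Fin 4),
      U x μ * U (x + (Pi.single μ 1 : Fin 4 → ℤ)) ν *
        (U (x + (Pi.single ν 1 : Fin 4 → ℤ)) μ)⁻¹ * (U x ν)⁻¹ = 1

namespace Good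

variable {Lsz : Fin 4 → ℤ} {U : (Fin 4 → ℤ) → Fin 4 → ℂ}

lemma ne (h : Good Lsz U) (x : Fin 4 → ℤ) (μ : Fin 4) : U x μ ≠ 0 := by
  intro h0
  have := h.habs x μ
  rw [h0] at this
  simp at this

lemma conj_eq_inv (h : Good Lsz U) (x : Fin 4 → ℤ) (μ : Fin 4) :
    (starRingEnd ℂ) (U x μ) = (U x μ)⁻¹ :=
  (Complex.inv_eq_conj (h.habs x μ)).symm

lemma flat (h : Good Lsz U) (x : Fin 4 → ℤ) (μ ν : Fin 4) :
    U (x + Ev ν) μ = (U x ν)⁻¹ * U x μ * U (x + Ev μ) ν := by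
  have hp := h.hplaq x μ ν
  have n1 : U x μ ≠ 0 := h.ne x μ
  have n2 : U x ν ≠ 0 := h.ne x ν
  have n4 : U (x + Ev ν) μ ≠ 0 := h.ne _ μ
  unfold Ev
  field_simp at hp ⊢
  linear_combination -hp

lemma line_shift (h : Good Lsz U) (q : Fin 4 → ℤ) (μ ν : Fin 4) (n : ℤ) :
    zp (fun s => U (q + Ev ν + s • Ev μ) μ) n
      = (U q ν)⁻¹ * zp (fun s => U (q + s • Ev μ) μ) n * U (q + n • Ev μ) ν := by
  have key := zp_telescope (fun s => U (q + Ev ν + s • Ev μ) μ)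
      (fun s => U (q + s • Ev μ) μ) (fun s => (U (q + s • Ev μ) ν)⁻¹)
      (fun s => h.ne _ μ) (fun s => inv_ne_zero (h.ne _ ν)) ?_ n
  · rw [key]
    rw [zero_smul, add_zero, inv_inv]
  · intro s
    have e1 : q + Ev ν + s • Ev μ = (q + s • Ev μ) + Ev ν := by abel
    have e2 : q + (s + 1) • Ev μ = (q + s • Ev μ) + Ev μ := by
      rw [add_smul, one_smul]; abel
    rw [e1, h.flat _ μ ν, e2, inv_inv]

end Good

def pp3 (x : Fin 4 → ℤ) : Fin 4 → ℤ := x 3 • Ev 3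
def pp2 (x : Fin 4 → ℤ) : Fin 4 → ℤ := pp3 x + x 2 • Ev 2
def pp1 (x : Fin 4 → ℤ) : Fin 4 → ℤ := pp2 x + x 1 • Ev 1

lemma pp3_def (x : Fin 4 → ℤ) : x 3 • Ev 3 = pp3 x := rfl
lemma pp2_def (x : Fin 4 → ℤ) : pp3 x + x 2 • Ev 2 = pp2 x := rfl
lemma pp1_def (x : Fin 4 → ℤ) : pp2 x + x 1 • Ev 1 = pp1 x := rfl
lemma pp0_def (x : Fin 4 → ℤ) : pp1 x + x 0 • Ev 0 = x := by
  funext i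
  simp only [pp1, pp2, pp3]
  fin_cases i <;> simp [Ev, Pi.single_apply]

def gg (U : (Fin 4 → ℤ) → Fin 4 → ℂ) (x : Fin 4 → ℤ) : ℂ :=
  zp (fun s => U (s • Ev 3) 3) (x 3) *
  zp (fun s => U (pp3 x + s • Ev 2) 2) (x 2) *
  zp (fun s => U (pp2 x + s • Ev 1) 1) (x 1) *
  zp (fun s => U (pp1 x + s • Ev 0) 0) (x 0)

namespace Good

variable {Lsz : Fin 4 → ℤ} {U : (Fin 4 → ℤ) → Fin 4 → ℂ}

lemma gg_ne (h : Good Lsz U) (x : Fin 4 → ℤ) : gg U x ≠ 0 := by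
  unfold gg
  exact mul_ne_zero (mul_ne_zero (mul_ne_zero
    (zp_ne_zero _ (fun s => h.ne _ _) _) (zp_ne_zero _ (fun s => h.ne _ _) _))
    (zp_ne_zero _ (fun s => h.ne _ _) _)) (zp_ne_zero _ (fun s => h.ne _ _) _)

lemma gg_abs (h : Good Lsz U) (x : Fin 4 → ℤ) : ‖gg U x‖ = 1 := by
  unfold gg
  rw [norm_mul, norm_mul, norm_mul]
  rw [zp_abs _ (fun s => h.habs _ _), zp_abs _ (fun s => h.habs _ _),
    zp_abs _ (fun s => h.habs _ _), zp_abs _ (fun s => h.habs _ _)]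
  norm_num

lemma gg_step0 (h : Good Lsz U) (x : Fin 4 → ℤ) :
    gg U (x + Ev 0) = gg U x * U x 0 := by
  have c3 : (x + Ev 0) 3 = x 3 := by simp [add_Ev_apply]
  have c2 : (x + Ev 0) 2 = x 2 := by simp [add_Ev_apply]
  have c1 : (x + Ev 0) 1 = x 1 := by simp [add_Ev_apply]
  have c0 : (x + Ev 0) 0 = x 0 + 1 := by simp [add_Ev_apply]
  have hp3 : pp3 (x + Ev 0) = pp3 x := by unfold pp3; rw [c3]
  have hp2 : pp2 (x + Ev 0) = pp2 x := by unfold pp2; rw [hp3, c2]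
  have hp1 : pp1 (x + Ev 0) = pp1 x := by unfold pp1; rw [hp2, c1]
  unfold gg
  rw [c3, c2, c1, c0, hp3, hp2, hp1, zp_succ _ _ (h.ne _ _), pp0_def]
  ring

lemma gg_step1 (h : Good Lsz U) (x : Fin 4 → ℤ) :
    gg U (x + Ev 1) = gg U x * U x 1 := by
  have c3 : (x + Ev 1) 3 = x 3 := by simp [add_Ev_apply]
  have c2 : (x + Ev 1) 2 = x 2 := by simp [add_Ev_apply]
  have c1 : (x + Ev 1) 1 = x 1 + 1 := by simp [add_Ev_apply]
  have c0 : (x + Ev 1) 0 = x 0 := by simp [add_Ev_apply]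
  have hp3 : pp3 (x + Ev 1) = pp3 x := by unfold pp3; rw [c3]
  have hp2 : pp2 (x + Ev 1) = pp2 x := by unfold pp2; rw [hp3, c2]
  have hp1 : pp1 (x + Ev 1) = pp1 x + Ev 1 := by
    unfold pp1; rw [hp2, c1, add_smul, one_smul]; abel
  unfold gg
  rw [c3, c2, c1, c0, hp3, hp2, hp1, zp_succ _ _ (h.ne _ _), pp1_def]
  have key0 : zp (fun s => U (pp1 x + Ev 1 + s • Ev 0) 0) (x 0)
      = (U (pp1 x) 1)⁻¹ * zp (fun s => U (pp1 x + s • Ev 0) 0) (x 0) * U x 1 := by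
    rw [h.line_shift (pp1 x) 0 1 (x 0), pp0_def]
  rw [key0]
  have n1 : U (pp1 x) 1 ≠ 0 := h.ne _ _
  field_simp

lemma gg_step2 (h : Good Lsz U) (x : Fin 4 → ℤ) :
    gg U (x + Ev 2) = gg U x * U x 2 := by
  have c3 : (x + Ev 2) 3 = x 3 := by simp [add_Ev_apply]
  have c2 : (x + Ev 2) 2 = x 2 + 1 := by simp [add_Ev_apply]
  have c1 : (x + Ev 2) 1 = x 1 := by simp [add_Ev_apply]
  have c0 : (x + Ev 2) 0 = x 0 := by simp [add_Ev_apply]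
  have hp3 : pp3 (x + Ev 2) = pp3 x := by unfold pp3; rw [c3]
  have hp2 : pp2 (x + Ev 2) = pp2 x + Ev 2 := by
    unfold pp2; rw [hp3, c2, add_smul, one_smul]; abel
  have hp1 : pp1 (x + Ev 2) = pp1 x + Ev 2 := by
    unfold pp1; rw [hp2, c1]; abel
  unfold gg
  rw [c3, c2, c1, c0, hp3, hp2, hp1, zp_succ _ _ (h.ne _ _), pp2_def]
  have key1 : zp (fun s => U (pp2 x + Ev 2 + s • Ev 1) 1) (x 1)
      = (U (pp2 x) 2)⁻¹ * zp (fun s => U (pp2 x + s • Ev 1) 1) (x 1) * U (pp1 x) 2 := by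
    rw [h.line_shift (pp2 x) 1 2 (x 1), pp1_def]
  have key0 : zp (fun s => U (pp1 x + Ev 2 + s • Ev 0) 0) (x 0)
      = (U (pp1 x) 2)⁻¹ * zp (fun s => U (pp1 x + s • Ev 0) 0) (x 0) * U x 2 := by
    rw [h.line_shift (pp1 x) 0 2 (x 0), pp0_def]
  rw [key1, key0]
  have n1 : U (pp2 x) 2 ≠ 0 := h.ne _ _
  have n2 : U (pp1 x) 2 ≠ 0 := h.ne _ _
  field_simp

lemma gg_step3 (h : Good Lsz U) (x : Fin 4 → ℤ) :
    gg U (x + Ev 3) = gg U x * U x 3 := by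
  have c3 : (x + Ev 3) 3 = x 3 + 1 := by simp [add_Ev_apply]
  have c2 : (x + Ev 3) 2 = x 2 := by simp [add_Ev_apply]
  have c1 : (x + Ev 3) 1 = x 1 := by simp [add_Ev_apply]
  have c0 : (x + Ev 3) 0 = x 0 := by simp [add_Ev_apply]
  have hp3 : pp3 (x + Ev 3) = pp3 x + Ev 3 := by
    unfold pp3; rw [c3, add_smul, one_smul]
  have hp2 : pp2 (x + Ev 3) = pp2 x + Ev 3 := by
    unfold pp2; rw [hp3, c2]; abel
  have hp1 : pp1 (x + Ev 3) = pp1 x + Ev 3 := by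
    unfold pp1; rw [hp2, c1]; abel
  unfold gg
  rw [c3, c2, c1, c0, hp3, hp2, hp1, zp_succ _ _ (h.ne _ _), pp3_def]
  have key2 : zp (fun s => U (pp3 x + Ev 3 + s • Ev 2) 2) (x 2)
      = (U (pp3 x) 3)⁻¹ * zp (fun s => U (pp3 x + s • Ev 2) 2) (x 2) * U (pp2 x) 3 := by
    rw [h.line_shift (pp3 x) 2 3 (x 2), pp2_def]
  have key1 : zp (fun s => U (pp2 x + Ev 3 + s • Ev 1) 1) (x 1)
      = (U (pp2 x) 3)⁻¹ * zp (fun s => U (pp2 x + s • Ev 1) 1) (x 1) * U (pp1 x) 3 := by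
    rw [h.line_shift (pp2 x) 1 3 (x 1), pp1_def]
  have key0 : zp (fun s => U (pp1 x + Ev 3 + s • Ev 0) 0) (x 0)
      = (U (pp1 x) 3)⁻¹ * zp (fun s => U (pp1 x + s • Ev 0) 0) (x 0) * U x 3 := by
    rw [h.line_shift (pp1 x) 0 3 (x 0), pp0_def]
  rw [key2, key1, key0]
  have n3 : U (pp3 x) 3 ≠ 0 := h.ne _ _
  have n2 : U (pp2 x) 3 ≠ 0 := h.ne _ _
  have n1 : U (pp1 x) 3 ≠ 0 := h.ne _ _
  field_simp

lemma gg_step (h : Good Lsz U) (x : Fin 4 → ℤ) (μ : Fin 4) :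
    gg U (x + Ev μ) = gg U x * U x μ := by
  fin_cases μ
  · exact h.gg_step0 x
  · exact h.gg_step1 x
  · exact h.gg_step2 x
  · exact h.gg_step3 x

end Good

lemma zp_inv (u : ℤ → ℂ) (n : ℤ) : zp (fun s => (u s)⁻¹) n = (zp u n)⁻¹ := by
  simp only [zp, Finset.prod_inv_distrib, mul_inv, inv_inv]

lemma const_of_step (F : (Fin 4 → ℤ) → ℂ) (hF : ∀ x μ, F (x + Ev μ) = F x)
    (x : Fin 4 → ℤ) : F x = F 0 := by
  have hn : ∀ (y : Fin 4 → ℤ) (μ : Fin 4) (n : ℤ), F (y + n • Ev μ) = F y := by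
    intro y μ n
    induction n using Int.induction_on with
    | zero => rw [zero_smul, add_zero]
    | succ k ih =>
        have e : y + ((k : ℤ) + 1) • Ev μ = (y + (k : ℤ) • Ev μ) + Ev μ := by
          rw [add_smul, one_smul]; abel
        rw [e, hF, ih]
    | pred k ih =>
        have hsm : (-(k:ℤ)) • Ev μ = (-(k:ℤ) - 1) • Ev μ + Ev μ := by
          calc (-(k:ℤ)) • Ev μ = ((-(k:ℤ) - 1) + 1) • Ev μ := by norm_num
            _ = (-(k:ℤ) - 1) • Ev μ + (1:ℤ) • Ev μ := add_smul _ _ _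
            _ = (-(k:ℤ) - 1) • Ev μ + Ev μ := by rw [one_smul]
        have e : y + (-(k : ℤ)) • Ev μ = (y + (-(k : ℤ) - 1) • Ev μ) + Ev μ := by
          rw [hsm]; abel
        calc F (y + (-(k:ℤ) - 1) • Ev μ)
            = F ((y + (-(k:ℤ) - 1) • Ev μ) + Ev μ) := (hF _ _).symm
          _ = F y := by rw [← e, ih]
  calc F x = F (x 0 • Ev 0 + x 1 • Ev 1 + x 2 • Ev 2 + x 3 • Ev 3) := by rw [← decomp4]
    _ = F (x 0 • Ev 0 + x 1 • Ev 1 + x 2 • Ev 2) := hn _ 3 _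
    _ = F (x 0 • Ev 0 + x 1 • Ev 1) := hn _ 2 _
    _ = F (x 0 • Ev 0) := hn _ 1 _
    _ = F 0 := by rw [← zero_add (x 0 • Ev 0)]; exact hn 0 0 _

def Wl (Lsz : Fin 4 → ℤ) (U : (Fin 4 → ℤ) → Fin 4 → ℂ) (μ : Fin 4) (x : Fin 4 → ℤ) : ℂ :=
  zp (fun s => U (x + s • Ev μ) μ) (Lsz μ)

namespace Good

variable {Lsz : Fin 4 → ℤ} {U : (Fin 4 → ℤ) → Fin 4 → ℂ}

lemma bc' (h : Good Lsz U) (x : Fin 4 → ℤ) (μ ρ : Fin 4) :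
    U (x + Lsz μ • Ev μ) ρ = if μ = 0 then U x ρ else (U x ρ)⁻¹ := by
  unfold Ev
  rw [h.hbc x μ ρ]
  split_ifs
  · rfl
  · exact (h.conj_eq_inv x ρ).symm ▸ rfl

lemma Wl_ne (h : Good Lsz U) (μ : Fin 4) (x : Fin 4 → ℤ) : Wl Lsz U μ x ≠ 0 :=
  zp_ne_zero _ (fun s => h.ne _ _) _

lemma Wl_abs (h : Good Lsz U) (μ : Fin 4) (x : Fin 4 → ℤ) :
    ‖Wl Lsz U μ x‖ = 1 :=
  zp_abs _ (fun s => h.habs _ _) _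

lemma gg_shift (h : Good Lsz U) (x : Fin 4 → ℤ) (μ : Fin 4) (n : ℤ) :
    gg U (x + n • Ev μ) = gg U x * zp (fun s => U (x + s • Ev μ) μ) n := by
  induction n using Int.induction_on with
  | zero => rw [zero_smul, add_zero, zp_zero, mul_one]
  | succ k ih =>
      have e : x + ((k : ℤ) + 1) • Ev μ = (x + (k : ℤ) • Ev μ) + Ev μ := by
        rw [add_smul, one_smul]; abel
      rw [e, h.gg_step _ μ, ih, zp_succ _ _ (h.ne _ _)]
      ring
  | pred k ih =>
      have hsm : (-(k:ℤ)) • Ev μ = (-(k:ℤ) - 1) • Ev μ + Ev μ := by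
        calc (-(k:ℤ)) • Ev μ = ((-(k:ℤ) - 1) + 1) • Ev μ := by norm_num
          _ = (-(k:ℤ) - 1) • Ev μ + (1:ℤ) • Ev μ := add_smul _ _ _
          _ = (-(k:ℤ) - 1) • Ev μ + Ev μ := by rw [one_smul]
      have e : x + (-(k : ℤ)) • Ev μ = (x + (-(k : ℤ) - 1) • Ev μ) + Ev μ := by
        rw [hsm]; abel
      have e2 : zp (fun s => U (x + s • Ev μ) μ) (-(k:ℤ))
          = zp (fun s => U (x + s • Ev μ) μ) (-(k:ℤ) - 1) * U (x + (-(k:ℤ)-1) • Ev μ) μ := by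
        have := zp_succ (fun s => U (x + s • Ev μ) μ) (-(k:ℤ) - 1) (h.ne _ _)
        rw [show (-(k:ℤ) - 1) + 1 = -(k:ℤ) by ring] at this
        exact this
      rw [e, h.gg_step _ μ, e2] at ih
      have hn0 : U (x + (-(k:ℤ)-1) • Ev μ) μ ≠ 0 := h.ne _ _
      field_simp at ih
      exact mul_right_cancel₀ hn0 (by linear_combination U (x + (-(k:ℤ)-1) • Ev μ) μ * ih)

lemma Wl_step (h : Good Lsz U) (μ ν : Fin 4) (x : Fin 4 → ℤ) :
    Wl Lsz U μ (x + Ev ν)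
      = if μ = 0 then Wl Lsz U μ x else Wl Lsz U μ x * ((U x ν)⁻¹)^2 := by
  have key := h.line_shift x μ ν (Lsz μ)
  have n2 : U x ν ≠ 0 := h.ne x ν
  unfold Wl
  rw [key, h.bc' x μ ν]
  split_ifs
  · field_simp
  · ring

lemma Wl_refl (h : Good Lsz U) (μ ν : Fin 4) (x : Fin 4 → ℤ) :
    Wl Lsz U μ (x + Lsz ν • Ev ν)
      = if ν = 0 then Wl Lsz U μ x else (Wl Lsz U μ x)⁻¹ := by
  have hfe : (fun s : ℤ => U (x + Lsz ν • Ev ν + s • Ev μ) μ)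
      = fun s : ℤ => if ν = 0 then U (x + s • Ev μ) μ else (U (x + s • Ev μ) μ)⁻¹ := by
    funext s
    have e : x + Lsz ν • Ev ν + s • Ev μ = (x + s • Ev μ) + Lsz ν • Ev ν := by abel
    rw [e, h.bc' _ ν μ]
  unfold Wl
  rw [hfe]
  split_ifs
  · rfl
  · exact zp_inv _ _

end Good

def chi (Lsz : Fin 4 → ℤ) (z : Fin 4 → ℂ) (x : Fin 4 → ℤ) : ℂ :=
  z 0 ^ (x 0 / Lsz 0) * z 1 ^ (x 1 / Lsz 1) * z 2 ^ (x 2 / Lsz 2) * z 3 ^ (x 3 / Lsz 3)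

lemma chi_ne (Lsz : Fin 4 → ℤ) (z : Fin 4 → ℂ) (hz : ∀ μ, z μ ≠ 0) (x : Fin 4 → ℤ) :
    chi Lsz z x ≠ 0 := by
  unfold chi
  exact mul_ne_zero (mul_ne_zero (mul_ne_zero (zpow_ne_zero _ (hz 0)) (zpow_ne_zero _ (hz 1)))
    (zpow_ne_zero _ (hz 2))) (zpow_ne_zero _ (hz 3))

lemma chi_abs (Lsz : Fin 4 → ℤ) (z : Fin 4 → ℂ) (hz : ∀ μ, ‖z μ‖ = 1)
    (x : Fin 4 → ℤ) : ‖chi Lsz z x‖ = 1 := by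
  unfold chi
  rw [norm_mul, norm_mul, norm_mul, norm_zpow, norm_zpow, norm_zpow, norm_zpow,
    hz 0, hz 1, hz 2, hz 3]
  norm_num

lemma chi_zero (Lsz : Fin 4 → ℤ) (z : Fin 4 → ℂ) : chi Lsz z 0 = 1 := by
  unfold chi
  norm_num

lemma chi_step (Lsz : Fin 4 → ℤ) (hL : ∀ μ, 0 < Lsz μ) (z : Fin 4 → ℂ) (hz : ∀ μ, z μ ≠ 0)
    (x : Fin 4 → ℤ) (μ : Fin 4) :
    chi Lsz z (x + Ev μ)
      = chi Lsz z x * (if x μ % Lsz μ = Lsz μ - 1 then z μ else 1) := by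
  have key : ∀ ν : Fin 4, z ν ^ ((x ν + 1) / Lsz ν)
      = z ν ^ (x ν / Lsz ν) * (if x ν % Lsz ν = Lsz ν - 1 then z ν else 1) := by
    intro ν
    rw [ediv_succ _ _ (hL ν)]
    split_ifs
    · rw [zpow_add₀ (hz ν), zpow_one]
    · rw [add_zero, mul_one]
  fin_cases μ
  · show chi Lsz z (x + Ev 0) = chi Lsz z x * (if x 0 % Lsz 0 = Lsz 0 - 1 then z 0 else 1)
    have d0 : (x + Ev 0) 0 = x 0 + 1 := by simp [add_Ev_apply]
    have d1 : (x + Ev 0) 1 = x 1 := by simp [add_Ev_apply]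
    have d2 : (x + Ev 0) 2 = x 2 := by simp [add_Ev_apply]
    have d3 : (x + Ev 0) 3 = x 3 := by simp [add_Ev_apply]
    unfold chi
    rw [d0, d1, d2, d3, key 0]; ring
  · show chi Lsz z (x + Ev 1) = chi Lsz z x * (if x 1 % Lsz 1 = Lsz 1 - 1 then z 1 else 1)
    have d0 : (x + Ev 1) 0 = x 0 := by simp [add_Ev_apply]
    have d1 : (x + Ev 1) 1 = x 1 + 1 := by simp [add_Ev_apply]
    have d2 : (x + Ev 1) 2 = x 2 := by simp [add_Ev_apply]
    have d3 : (x + Ev 1) 3 = x 3 := by simp [add_Ev_apply]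
    unfold chi
    rw [d0, d1, d2, d3, key 1]; ring
  · show chi Lsz z (x + Ev 2) = chi Lsz z x * (if x 2 % Lsz 2 = Lsz 2 - 1 then z 2 else 1)
    have d0 : (x + Ev 2) 0 = x 0 := by simp [add_Ev_apply]
    have d1 : (x + Ev 2) 1 = x 1 := by simp [add_Ev_apply]
    have d2 : (x + Ev 2) 2 = x 2 + 1 := by simp [add_Ev_apply]
    have d3 : (x + Ev 2) 3 = x 3 := by simp [add_Ev_apply]
    unfold chi
    rw [d0, d1, d2, d3, key 2]; ring
  · show chi Lsz z (x + Ev 3) = chi Lsz z x * (if x 3 % Lsz 3 = Lsz 3 - 1 then z 3 else 1)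
    have d0 : (x + Ev 3) 0 = x 0 := by simp [add_Ev_apply]
    have d1 : (x + Ev 3) 1 = x 1 := by simp [add_Ev_apply]
    have d2 : (x + Ev 3) 2 = x 2 := by simp [add_Ev_apply]
    have d3 : (x + Ev 3) 3 = x 3 + 1 := by simp [add_Ev_apply]
    unfold chi
    rw [d0, d1, d2, d3, key 3]; ring

lemma chi_refl (Lsz : Fin 4 → ℤ) (hL : ∀ μ, 0 < Lsz μ) (z : Fin 4 → ℂ) (hz : ∀ μ, z μ ≠ 0)
    (x : Fin 4 → ℤ) (μ : Fin 4) :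
    chi Lsz z (x + Lsz μ • Ev μ) = chi Lsz z x * z μ := by
  have key : ∀ ν : Fin 4, z ν ^ ((x ν + Lsz ν) / Lsz ν) = z ν ^ (x ν / Lsz ν) * z ν := by
    intro ν
    rw [ediv_addL _ _ (hL ν), zpow_add₀ (hz ν), zpow_one]
  fin_cases μ
  · show chi Lsz z (x + Lsz 0 • Ev 0) = chi Lsz z x * z 0
    have d0 : (x + Lsz 0 • Ev 0) 0 = x 0 + Lsz 0 := by simp [add_smul_Ev_apply]
    have d1 : (x + Lsz 0 • Ev 0) 1 = x 1 := by simp [add_smul_Ev_apply]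
    have d2 : (x + Lsz 0 • Ev 0) 2 = x 2 := by simp [add_smul_Ev_apply]
    have d3 : (x + Lsz 0 • Ev 0) 3 = x 3 := by simp [add_smul_Ev_apply]
    unfold chi
    rw [d0, d1, d2, d3, key 0]; ring
  · show chi Lsz z (x + Lsz 1 • Ev 1) = chi Lsz z x * z 1
    have d0 : (x + Lsz 1 • Ev 1) 0 = x 0 := by simp [add_smul_Ev_apply]
    have d1 : (x + Lsz 1 • Ev 1) 1 = x 1 + Lsz 1 := by simp [add_smul_Ev_apply]
    have d2 : (x + Lsz 1 • Ev 1) 2 = x 2 := by simp [add_smul_Ev_apply]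
    have d3 : (x + Lsz 1 • Ev 1) 3 = x 3 := by simp [add_smul_Ev_apply]
    unfold chi
    rw [d0, d1, d2, d3, key 1]; ring
  · show chi Lsz z (x + Lsz 2 • Ev 2) = chi Lsz z x * z 2
    have d0 : (x + Lsz 2 • Ev 2) 0 = x 0 := by simp [add_smul_Ev_apply]
    have d1 : (x + Lsz 2 • Ev 2) 1 = x 1 := by simp [add_smul_Ev_apply]
    have d2 : (x + Lsz 2 • Ev 2) 2 = x 2 + Lsz 2 := by simp [add_smul_Ev_apply]
    have d3 : (x + Lsz 2 • Ev 2) 3 = x 3 := by simp [add_smul_Ev_apply]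
    unfold chi
    rw [d0, d1, d2, d3, key 2]; ring
  · show chi Lsz z (x + Lsz 3 • Ev 3) = chi Lsz z x * z 3
    have d0 : (x + Lsz 3 • Ev 3) 0 = x 0 := by simp [add_smul_Ev_apply]
    have d1 : (x + Lsz 3 • Ev 3) 1 = x 1 := by simp [add_smul_Ev_apply]
    have d2 : (x + Lsz 3 • Ev 3) 2 = x 2 := by simp [add_smul_Ev_apply]
    have d3 : (x + Lsz 3 • Ev 3) 3 = x 3 + Lsz 3 := by simp [add_smul_Ev_apply]
    unfold chi
    rw [d0, d1, d2, d3, key 3]; ring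

lemma abs_one_of_sq {a : ℂ} (ha : a ^ 2 = 1) : ‖a‖ = 1 := by
  have h2 : (‖a‖) ^ 2 = 1 := by
    rw [← norm_pow, ha, norm_one]
  nlinarith [norm_nonneg a]

lemma ne_zero_of_sq {a : ℂ} (ha : a ^ 2 = 1) : a ≠ 0 := by
  intro h0
  rw [h0] at ha
  norm_num at ha

lemma gg_zero (U : (Fin 4 → ℤ) → Fin 4 → ℂ) : gg U 0 = 1 := by
  have : ∀ i : Fin 4, (0 : Fin 4 → ℤ) i = 0 := fun i => rfl
  simp [gg, this, zp_zero]

namespace Good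

variable {Lsz : Fin 4 → ℤ} {U : (Fin 4 → ℤ) → Fin 4 → ℂ}

lemma rep_formula (h : Good Lsz U) (z : Fin 4 → ℂ) (Λ : (Fin 4 → ℤ) → ℂ)
    (hz3 : z 3 = 1) (hz2 : ∀ μ, z μ ^ 2 = 1)
    (hΛa : ∀ x, ‖Λ x‖ = 1)
    (hΛbc : ∀ (x : Fin 4 → ℤ) (μ : Fin 4),
      Λ (x + Lsz μ • (Pi.single μ 1 : Fin 4 → ℤ)) =
        if μ = 0 then Λ x else (starRingEnd ℂ) (Λ x))
    (hlink : ∀ (x : Fin 4 → ℤ) (μ : Fin 4),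
      U x μ = Λ x * (if x μ % Lsz μ = Lsz μ - 1 then z μ else 1) *
        (Λ (x + (Pi.single μ 1 : Fin 4 → ℤ)))⁻¹) :
    ∀ μ, z μ = if μ = 0 then Wl Lsz U 0 0
      else Wl Lsz U μ 0 * (Wl Lsz U 3 0)⁻¹ := by
  have hΛne : ∀ x, Λ x ≠ 0 := by
    intro x h0
    have := hΛa x
    rw [h0] at this
    simp at this
  have hzne : ∀ μ, z μ ≠ 0 := fun μ => ne_zero_of_sq (hz2 μ)
  have hconj : ∀ x, (starRingEnd ℂ) (Λ x) = (Λ x)⁻¹ := fun x =>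
    (Complex.inv_eq_conj (by exact hΛa x)).symm
  -- telescoping along a line through the origin
  have key : ∀ μ : Fin 4, Wl Lsz U μ 0
      = Λ 0 * z μ * (Λ ((0 : Fin 4 → ℤ) + Lsz μ • Ev μ))⁻¹ := by
    intro μ
    have htel := zp_telescope (fun s => U ((0 : Fin 4 → ℤ) + s • Ev μ) μ)
        (fun s => if s % Lsz μ = Lsz μ - 1 then z μ else 1)
        (fun s => Λ ((0 : Fin 4 → ℤ) + s • Ev μ))
        (fun s => by split_ifs; exacts [hzne μ, one_ne_zero])
        (fun s => hΛne _) ?_ (Lsz μ)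
    · unfold Wl
      rw [htel, prodline _ (h.hL μ) (z μ)]
      congr 2
      rw [zero_smul, add_zero]
    · intro s
      have e0 : ((0 : Fin 4 → ℤ) + s • Ev μ) μ = s := by
        rw [add_smul_Ev_apply, if_pos rfl]
        simp
      have e1 : ((0 : Fin 4 → ℤ) + s • Ev μ) + (Pi.single μ 1 : Fin 4 → ℤ)
          = (0 : Fin 4 → ℤ) + (s + 1) • Ev μ := by
        rw [add_smul, one_smul]
        show _ + Ev μ = _
        abel
      rw [hlink ((0 : Fin 4 → ℤ) + s • Ev μ) μ, e0, e1]
  intro μ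
  by_cases hμ : μ = 0
  · subst hμ
    have hkey := key 0
    rw [hΛbc 0 0, if_pos rfl] at hkey
    rw [if_pos rfl, hkey]
    have h0 := hΛne 0
    field_simp
  · have h3 : (3 : Fin 4) ≠ 0 := by decide
    have e : ∀ ν : Fin 4, ν ≠ 0 → Wl Lsz U ν 0 = Λ 0 * Λ 0 * z ν := by
      intro ν hν
      have hkey := key ν
      rw [hΛbc 0 ν, if_neg hν, hconj, inv_inv] at hkey
      rw [hkey]; ring
    have h0 := hΛne 0
    have hzμ := hzne μ
    rw [if_neg hμ, e μ hμ, e 3 h3, hz3]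
    field_simp

end Good

end Aux14

/-- Classification of classical vacua of compact QED with C* boundary conditions in the
spatial directions and periodic time: every U(1) lattice gauge field with all plaquettes
equal to 1 is gauge-equivalent to exactly one representative `Ū_z` with
`z ∈ Ω = {(z₀,z₁,z₂,1) : z_i² = 1}`, where `Ū_z(x,μ) = z_μ` if `x_μ = L_μ - 1` and `1`
otherwise. -/
theorem stmt14 (Lsz : Fin 4 → ℤ) (hLsz : ∀ μ, 0 < Lsz μ)
    (U : (Fin 4 → ℤ) → Fin 4 → ℂ)
    (hU1 : ∀ x μ, ‖U x μ‖ = 1)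
    (hbc : ∀ (x : Fin 4 → ℤ) (μ ρ : Fin 4),
      U (x + Lsz μ • (Pi.single μ 1 : Fin 4 → ℤ)) ρ =
        if μ = 0 then U x ρ else (starRingEnd ℂ) (U x ρ))
    (hplaq : ∀ (x : Fin 4 → ℤ) (μ ν : Fin 4),
      U x μ * U (x + (Pi.single μ 1 : Fin 4 → ℤ)) ν *
        (U (x + (Pi.single ν 1 : Fin 4 → ℤ)) μ)⁻¹ * (U x ν)⁻¹ = 1) :
    ∃! z : Fin 4 → ℂ,
      (z 3 = 1 ∧ ∀ μ, z μ ^ 2 = 1) ∧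
      ∃ Λ : (Fin 4 → ℤ) → ℂ,
        (∀ x, ‖Λ x‖ = 1) ∧
        (∀ (x : Fin 4 → ℤ) (μ : Fin 4),
          Λ (x + Lsz μ • (Pi.single μ 1 : Fin 4 → ℤ)) =
            if μ = 0 then Λ x else (starRingEnd ℂ) (Λ x)) ∧
        (∀ (x : Fin 4 → ℤ) (μ : Fin 4),
          U x μ = Λ x * (if x μ % Lsz μ = Lsz μ - 1 then z μ else 1) *
            (Λ (x + (Pi.single μ 1 : Fin 4 → ℤ)))⁻¹) := by
  have h : Good Lsz U := ⟨hLsz, hU1, hbc, hplaq⟩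
  classical
  -- constancy of the temporal Wilson line
  have hW0const : ∀ x, Wl Lsz U 0 x = Wl Lsz U 0 0 := by
    refine const_of_step _ (fun x ν => ?_)
    rw [h.Wl_step 0 ν x, if_pos rfl]
  -- constancy of spatial Wilson line ratios
  have hCconst : ∀ (i : Fin 4), i ≠ 0 →
      ∀ x, Wl Lsz U i x * (Wl Lsz U 3 x)⁻¹ = Wl Lsz U i 0 * (Wl Lsz U 3 0)⁻¹ := by
    intro i hi
    refine const_of_step (fun x => Wl Lsz U i x * (Wl Lsz U 3 x)⁻¹) (fun x ν => ?_)
    rw [h.Wl_step i ν x, if_neg hi, h.Wl_step 3 ν x,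
      if_neg (by decide : (3 : Fin 4) ≠ 0)]
    have n1 := h.ne x ν
    have n2 := h.Wl_ne 3 x
    field_simp
  -- reflection through an L₁ shift
  have refl1 : ∀ i : Fin 4,
      Wl Lsz U i ((0 : Fin 4 → ℤ) + Lsz 1 • Ev 1) = (Wl Lsz U i 0)⁻¹ := by
    intro i
    rw [h.Wl_refl i 1 0, if_neg (by decide : (1 : Fin 4) ≠ 0)]
  have hW0sq : Wl Lsz U 0 0 ^ 2 = 1 := by
    have h1 : Wl Lsz U 0 0 = (Wl Lsz U 0 0)⁻¹ := (hW0const _).symm.trans (refl1 0)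
    rw [sq]
    nth_rewrite 2 [h1]
    exact mul_inv_cancel₀ (h.Wl_ne 0 0)
  have hCsq : ∀ i : Fin 4, i ≠ 0 → (Wl Lsz U i 0 * (Wl Lsz U 3 0)⁻¹) ^ 2 = 1 := by
    intro i hi
    have hc := hCconst i hi ((0 : Fin 4 → ℤ) + Lsz 1 • Ev 1)
    rw [refl1 i, refl1 3, inv_inv] at hc
    have h1 : Wl Lsz U i 0 * (Wl Lsz U 3 0)⁻¹
        = (Wl Lsz U i 0 * (Wl Lsz U 3 0)⁻¹)⁻¹ := by
      rw [mul_inv, inv_inv]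
      exact hc.symm
    rw [sq]
    nth_rewrite 2 [h1]
    exact mul_inv_cancel₀ (mul_ne_zero (h.Wl_ne i 0) (inv_ne_zero (h.Wl_ne 3 0)))
  -- the holonomy data
  set z : Fin 4 → ℂ := fun μ => if μ = 0 then Wl Lsz U 0 0
      else if μ = 3 then 1 else Wl Lsz U μ 0 * (Wl Lsz U 3 0)⁻¹ with hzdef
  have hz3 : z 3 = 1 := by
    rw [hzdef]
    dsimp only
    rw [if_neg (by decide : (3 : Fin 4) ≠ 0), if_pos rfl]
  have hz0 : z 0 = Wl Lsz U 0 0 := by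
    rw [hzdef]
    dsimp only
    rw [if_pos rfl]
  have hzsq : ∀ μ, z μ ^ 2 = 1 := by
    intro μ
    by_cases h0 : μ = 0
    · subst h0
      rw [hz0]
      exact hW0sq
    · by_cases h3 : μ = 3
      · subst h3
        rw [hz3]
        norm_num
      · rw [hzdef]
        dsimp only
        rw [if_neg h0, if_neg h3]
        exact hCsq μ h0
  have hzne : ∀ μ, z μ ≠ 0 := fun μ => ne_zero_of_sq (hzsq μ)
  have hzabs : ∀ μ, ‖z μ‖ = 1 := fun μ => abs_one_of_sq (hzsq μ)
  -- a square root of the Wilson line in direction 3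
  obtain ⟨w, hw⟩ := IsAlgClosed.exists_pow_nat_eq (Wl Lsz U 3 0) (n := 2) (by norm_num)
  have hwne : w ≠ 0 := by
    intro h0
    rw [h0] at hw
    exact h.Wl_ne 3 0 (by rw [← hw]; norm_num)
  have hwabs : ‖w‖ = 1 := by
    have h2 : ‖w‖ ^ 2 = 1 := by
      rw [← norm_pow, hw]
      exact h.Wl_abs 3 0
    nlinarith [norm_nonneg w]
  -- the gauge transformation
  set Λ : (Fin 4 → ℤ) → ℂ := fun x => w * (gg U x)⁻¹ * chi Lsz z x with hΛdef
  have hΛne : ∀ x, Λ x ≠ 0 := fun x =>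
    mul_ne_zero (mul_ne_zero hwne (inv_ne_zero (h.gg_ne x))) (chi_ne _ _ hzne x)
  have hΛabs : ∀ x, ‖Λ x‖ = 1 := by
    intro x
    rw [hΛdef]
    dsimp only
    rw [norm_mul, norm_mul, norm_inv, h.gg_abs x, chi_abs _ _ hzabs x, hwabs]
    norm_num
  have hΛ0 : Λ 0 = w := by
    rw [hΛdef]
    dsimp only
    rw [gg_zero, chi_zero]
    norm_num
  -- the one-step transformation law
  have hstep : ∀ (x) (μ : Fin 4), Λ (x + Ev μ)
      = Λ x * (U x μ)⁻¹ * (if x μ % Lsz μ = Lsz μ - 1 then z μ else 1) := by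
    intro x μ
    rw [hΛdef]
    dsimp only
    rw [h.gg_step x μ, chi_step Lsz hLsz z hzne x μ]
    have := h.ne x μ
    have := h.gg_ne x
    field_simp
  -- the link relation
  have hlink : ∀ (x : Fin 4 → ℤ) (μ : Fin 4),
      U x μ = Λ x * (if x μ % Lsz μ = Lsz μ - 1 then z μ else 1) *
        (Λ (x + (Pi.single μ 1 : Fin 4 → ℤ)))⁻¹ := by
    intro x μ
    have hs : Λ (x + (Pi.single μ 1 : Fin 4 → ℤ))
        = Λ x * (U x μ)⁻¹ * (if x μ % Lsz μ = Lsz μ - 1 then z μ else 1) := hstep x μ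
    have hin : (if x μ % Lsz μ = Lsz μ - 1 then z μ else 1) ≠ 0 := by
      split_ifs
      exacts [hzne μ, one_ne_zero]
    have hU := h.ne x μ
    have hΛx := hΛne x
    rw [hs, mul_inv, mul_inv, inv_inv]
    rw [show Λ x * (if x μ % Lsz μ = Lsz μ - 1 then z μ else 1) *
        ((Λ x)⁻¹ * U x μ * (if x μ % Lsz μ = Lsz μ - 1 then z μ else 1)⁻¹)
      = (Λ x * (Λ x)⁻¹) *
        ((if x μ % Lsz μ = Lsz μ - 1 then z μ else 1) *
          (if x μ % Lsz μ = Lsz μ - 1 then z μ else 1)⁻¹) * U x μ from by ring,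
      mul_inv_cancel₀ hΛx, mul_inv_cancel₀ hin, one_mul, one_mul]
  -- gg over a full period gives the Wilson line
  have hggW : ∀ (x) (μ : Fin 4),
      gg U (x + Lsz μ • Ev μ) = gg U x * Wl Lsz U μ x := fun x μ =>
    h.gg_shift x μ (Lsz μ)
  -- square of Λ in terms of Wilson lines
  have hLsq : ∀ (μ : Fin 4), μ ≠ 0 → ∀ x, Λ x ^ 2 = Wl Lsz U μ x * (z μ)⁻¹ := by
    intro μ hμ
    have hconst : ∀ x, Λ x ^ 2 * (Wl Lsz U μ x)⁻¹ = Λ 0 ^ 2 * (Wl Lsz U μ 0)⁻¹ := by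
      refine const_of_step (fun x => Λ x ^ 2 * (Wl Lsz U μ x)⁻¹) (fun x ν => ?_)
      rw [hstep x ν, h.Wl_step μ ν x, if_neg hμ]
      have hU := h.ne x ν
      have hWne := h.Wl_ne μ x
      have hit2 : (if x ν % Lsz ν = Lsz ν - 1 then z ν else 1) ^ 2 = 1 := by
        split_ifs
        exacts [hzsq ν, one_pow 2]
      rw [mul_pow, mul_pow, hit2, mul_one]
      field_simp
    have hval : Wl Lsz U 3 0 * (Wl Lsz U μ 0)⁻¹ = (z μ)⁻¹ := by
      by_cases h3 : μ = 3
      · subst h3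
        rw [hz3, mul_inv_cancel₀ (h.Wl_ne 3 0), inv_one]
      · rw [hzdef]
        dsimp only
        rw [if_neg hμ, if_neg h3, mul_inv, inv_inv]
        ring
    intro x
    have hc := hconst x
    rw [hΛ0, hw, hval] at hc
    have hWne := h.Wl_ne μ x
    field_simp at hc
    field_simp
    linear_combination hc
  -- the boundary condition for Λ
  have hΛbc : ∀ (x : Fin 4 → ℤ) (μ : Fin 4),
      Λ (x + Lsz μ • (Pi.single μ 1 : Fin 4 → ℤ)) =
        if μ = 0 then Λ x else (starRingEnd ℂ) (Λ x) := by
    intro x μ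
    have hL1 : Λ (x + Lsz μ • (Pi.single μ 1 : Fin 4 → ℤ))
        = w * (gg U x * Wl Lsz U μ x)⁻¹ * (chi Lsz z x * z μ) := by
      show Λ (x + Lsz μ • Ev μ) = _
      rw [hΛdef]
      dsimp only
      rw [hggW x μ, chi_refl Lsz hLsz z hzne x μ]
    by_cases hμ : μ = 0
    · subst hμ
      rw [if_pos rfl, hL1, hW0const x, ← hz0, hΛdef]
      dsimp only
      have n1 := h.gg_ne x
      have n2 := hzne 0
      field_simp
    · rw [if_neg hμ]
      have hcj : (starRingEnd ℂ) (Λ x) = (Λ x)⁻¹ :=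
        (Complex.inv_eq_conj (by exact hΛabs x)).symm
      rw [hL1, hcj]
      have hsq := hLsq μ hμ x
      rw [hΛdef] at hsq ⊢
      dsimp only at hsq ⊢
      have n1 := h.gg_ne x
      have n2 := h.Wl_ne μ x
      have n3 := hzne μ
      have n4 := chi_ne Lsz z hzne x
      field_simp at hsq ⊢
      linear_combination hsq
  refine ⟨z, ⟨⟨hz3, hzsq⟩, Λ, hΛabs, hΛbc, hlink⟩, ?_⟩
  rintro z' ⟨⟨hz3', hzsq'⟩, Λ', hΛ'a, hΛ'bc, hΛ'l⟩
  funext μ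
  rw [h.rep_formula z' Λ' hz3' hzsq' hΛ'a hΛ'bc hΛ'l μ,
    h.rep_formula z Λ hz3 hzsq hΛabs hΛbc hlink μ]
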